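/- Let p and n be natural numbers, let P be a p × p integer matrix with det P ≠ 0, and let Q be a p × n integer matrix. Let A = (P | Q) be the p × (p + n) block matrix, regarded as a matrix over ℚ. For each j = 1, …, n, let u_j ∈ ℤ^(p+n) be the vector whose first p coordinates form the negative of the j-th column of adj(P) · Q and whose last n coordinates form det(P) times the j-th standard basis vector of ℤ^n. Then: (i) A u_j = 0 for each j; (ii) the vectors u_1, …, u_n span over ℚ the kernel of the linear map ℚ^(p+n) → ℚ^p given by x ↦ A x; (iii) each u_j has at most p + 1 nonzero coordinates; and (iv) if in addition every column of P and every column of Q has entries whose absolute values sum to at most 3, then every coordinate of every u_j has absolute value at most 3^p. -/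

import Mathlib

open Finset

set_option maxHeartbeats 1000000 in
/-- Hadamard-type ℓ¹ bound: `|det M| ≤ ∏ columns ℓ¹-norms`. -/
lemma abs_det_le_prod_colsum {m : ℕ} (M : Matrix (Fin m) (Fin m) ℤ) :
    |M.det| ≤ ∏ j, ∑ i, |M i j| := by
  rw [Matrix.det_apply]
  calc |∑ σ : Equiv.Perm (Fin m), Equiv.Perm.sign σ • ∏ i, M (σ i) i|
      ≤ ∑ σ : Equiv.Perm (Fin m), |Equiv.Perm.sign σ • ∏ i, M (σ i) i| :=
        Finset.abs_sum_le_sum_abs _ _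
    _ = ∑ σ : Equiv.Perm (Fin m), ∏ i, |M (σ i) i| := by
        refine Finset.sum_congr rfl fun σ _ => ?_
        rcases Int.units_eq_one_or (Equiv.Perm.sign σ) with h | h <;>
          simp [h, Finset.abs_prod]
    _ = ∑ f ∈ (Finset.univ : Finset (Equiv.Perm (Fin m))).image
          (fun σ : Equiv.Perm (Fin m) => (σ : Fin m → Fin m)),
          ∏ i, |M (f i) i| := by
        rw [Finset.sum_image]
        intro a _ b _ hab
        exact Equiv.coe_fn_injective hab
    _ ≤ ∑ f ∈ Fintype.piFinset (fun _ : Fin m => (Finset.univ : Finset (Fin m))),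
          ∏ i, |M (f i) i| := by
        apply Finset.sum_le_sum_of_subset_of_nonneg
        · intro f _
          exact Fintype.mem_piFinset.mpr fun i => Finset.mem_univ _
        · intro f _ _
          exact Finset.prod_nonneg fun i _ => abs_nonneg _
    _ = ∏ j, ∑ i, |M i j| :=
        (Finset.prod_univ_sum (fun _ : Fin m => (Finset.univ : Finset (Fin m)))
          (fun i j => |M j i|)).symm

lemma abs_det_le_pow {m : ℕ} (M : Matrix (Fin m) (Fin m) ℤ)
    (h : ∀ j, ∑ i, |M i j| ≤ 3) : |M.det| ≤ 3 ^ m := by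
  calc |M.det| ≤ ∏ j, ∑ i, |M i j| := abs_det_le_prod_colsum M
    _ ≤ ∏ _j : Fin m, 3 :=
        Finset.prod_le_prod (fun j _ => Finset.sum_nonneg fun i _ => abs_nonneg _)
          (fun j _ => h j)
    _ = 3 ^ m := by simp

/-- The block matrix `A = (P | Q)` regarded over `ℚ`. -/
noncomputable def blockA (p n : ℕ) (P : Matrix (Fin p) (Fin p) ℤ)
    (Q : Matrix (Fin p) (Fin n) ℤ) : Matrix (Fin p) (Fin p ⊕ Fin n) ℚ :=
  Matrix.fromCols (P.map fun x => (x : ℚ)) (Q.map fun x => (x : ℚ))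

/-- The integral fundamental solution `u_j`: first `p` coordinates are the negative of the
`j`-th column of `adj(P) · Q`, last `n` coordinates are `det(P)` times the `j`-th
standard basis vector. -/
def uVec (p n : ℕ) (P : Matrix (Fin p) (Fin p) ℤ) (Q : Matrix (Fin p) (Fin n) ℤ)
    (j : Fin n) : (Fin p ⊕ Fin n) → ℤ :=
  Sum.elim (fun i => -((P.adjugate * Q) i j)) (fun k => if k = j then P.det else 0)

set_option maxHeartbeats 1000000 in
theorem fundamental_solutions (p n : ℕ) (P : Matrix (Fin p) (Fin p) ℤ)
    (Q : Matrix (Fin p) (Fin n) ℤ) (hdet : P.det ≠ 0) :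
    (∀ j : Fin n,
      (blockA p n P Q).mulVec (fun x => ((uVec p n P Q j x : ℤ) : ℚ)) = 0) ∧
    (Submodule.span ℚ
        (Set.range fun j : Fin n => fun x => ((uVec p n P Q j x : ℤ) : ℚ)) =
      LinearMap.ker (blockA p n P Q).mulVecLin) ∧
    (∀ j : Fin n,
      (Finset.univ.filter fun x => uVec p n P Q j x ≠ 0).card ≤ p + 1) ∧
    ((∀ j, ∑ i, |P i j| ≤ 3) → (∀ j, ∑ i, |Q i j| ≤ 3) →
      ∀ j x, |uVec p n P Q j x| ≤ 3 ^ p) := by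
  have hd0 : ((P.det : ℚ)) ≠ 0 := Int.cast_ne_zero.mpr hdet
  -- Part (i)
  have hAu : ∀ j : Fin n,
      (blockA p n P Q).mulVec (fun x => ((uVec p n P Q j x : ℤ) : ℚ)) = 0 := by
    intro j
    have key : P * (P.adjugate * Q) = P.det • Q := by
      rw [← Matrix.mul_assoc, Matrix.mul_adjugate, Matrix.smul_mul, Matrix.one_mul]
    funext i
    have hkey := congrFun (congrFun key i) j
    rw [Matrix.mul_apply] at hkey
    simp only [Matrix.smul_apply, smul_eq_mul] at hkey
    have hint : ∑ k, P i k * (-((P.adjugate * Q) k j)) + Q i j * P.det = 0 := by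
      simp only [mul_neg, Finset.sum_neg_distrib, hkey]
      ring
    simp only [blockA, uVec, Matrix.mulVec, dotProduct, Matrix.fromCols,
      Matrix.of_apply, Fintype.sum_sum_type, Sum.elim_inl, Sum.elim_inr,
      Matrix.map_apply, Pi.zero_apply]
    have h2 : ∑ k, (Q i k : ℚ) * (((if k = j then P.det else 0 : ℤ) : ℚ)) =
        (Q i j : ℚ) * (P.det : ℚ) := by
      simp [apply_ite (fun a : ℤ => (a : ℚ)), mul_ite]
    rw [h2]
    have h1 : ∑ k, (P i k : ℚ) * (((-((P.adjugate * Q) k j) : ℤ)) : ℚ) =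
        ((∑ k, P i k * (-((P.adjugate * Q) k j)) : ℤ) : ℚ) := by
      push_cast
      ring
    rw [h1]
    have := congrArg (fun a : ℤ => (a : ℚ)) hint
    push_cast at this ⊢
    linarith [this]
  refine ⟨hAu, ?_, ?_, ?_⟩
  -- Part (ii)
  · apply le_antisymm
    · rw [Submodule.span_le]
      rintro _ ⟨j, rfl⟩
      exact LinearMap.mem_ker.mpr (by rw [Matrix.mulVecLin_apply]; exact hAu j)
    · intro x hx
      rw [LinearMap.mem_ker, Matrix.mulVecLin_apply] at hx
      set y : Fin p → ℚ := fun i => x (Sum.inl i) with hy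
      set z : Fin n → ℚ := fun k => x (Sum.inr k) with hz
      have hxe : x = Sum.elim y z := by funext s; cases s <;> rfl
      rw [hxe, blockA, Matrix.fromCols_mulVec_sumElim] at hx
      set P' : Matrix (Fin p) (Fin p) ℚ := P.map (fun a : ℤ => (a : ℚ)) with hP'
      set Q' : Matrix (Fin p) (Fin n) ℚ := Q.map (fun a : ℤ => (a : ℚ)) with hQ'
      have hPy : P'.mulVec y = -(Q'.mulVec z) := by
        rw [← add_eq_zero_iff_eq_neg]; exact hx
      have hdP' : P'.det = (P.det : ℚ) := by
        have := RingHom.map_det (Int.castRingHom ℚ) P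
        simpa [RingHom.mapMatrix_apply, hP'] using this.symm
      have hadjQ : (P.adjugate * Q).map (fun a : ℤ => (a : ℚ)) = P'.adjugate * Q' := by
        have h1 := RingHom.map_adjugate (Int.castRingHom ℚ) P
        have h2 : (P.adjugate * Q).map (fun a : ℤ => (a : ℚ)) =
            (P.adjugate.map fun a : ℤ => (a : ℚ)) * Q' := by
          exact Matrix.map_mul (f := Int.castRingHom ℚ)
        have h3 : (P.adjugate.map fun a : ℤ => (a : ℚ)) = P'.adjugate := by
          simpa [RingHom.mapMatrix_apply, hP'] using h1
        rw [h2, h3]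
      have h1 : P'.det • y = -((P'.adjugate * Q').mulVec z) := by
        calc P'.det • y = (P'.det • (1 : Matrix (Fin p) (Fin p) ℚ)).mulVec y := by
              rw [Matrix.smul_mulVec, Matrix.one_mulVec]
          _ = (P'.adjugate * P').mulVec y := by rw [Matrix.adjugate_mul]
          _ = P'.adjugate.mulVec (P'.mulVec y) := by rw [← Matrix.mulVec_mulVec]
          _ = -((P'.adjugate * Q').mulVec z) := by
              rw [hPy, Matrix.mulVec_neg, Matrix.mulVec_mulVec]
      have hxsum : x = ∑ j : Fin n, ((P.det : ℚ)⁻¹ * z j) •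
          (fun s => ((uVec p n P Q j s : ℤ) : ℚ)) := by
        funext s
        have hsum : (∑ j : Fin n, ((P.det : ℚ)⁻¹ * z j) •
            (fun s => ((uVec p n P Q j s : ℤ) : ℚ))) s =
            ∑ j : Fin n, ((P.det : ℚ)⁻¹ * z j) * ((uVec p n P Q j s : ℤ) : ℚ) := by
          simp [Finset.sum_apply]
        rw [hsum]
        cases s with
        | inr k =>
          simp only [uVec, Sum.elim_inr, apply_ite (fun a : ℤ => (a : ℚ)),
            Int.cast_zero, mul_ite, mul_zero]
          rw [Finset.sum_ite_eq Finset.univ k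
            (fun j => ((P.det : ℚ)⁻¹ * z j) * (P.det : ℚ))]
          simp only [Finset.mem_univ, if_true]
          show x (Sum.inr k) = _
          field_simp
          rfl
        | inl i =>
          simp only [uVec, Sum.elim_inl]
          have h1i := congrFun h1 i
          simp only [Pi.smul_apply, smul_eq_mul, Pi.neg_apply, hdP'] at h1i
          have hmv : ((P'.adjugate * Q').mulVec z) i =
              ∑ j, ((P.adjugate * Q) i j : ℚ) * z j := by
            rw [Matrix.mulVec]
            simp only [dotProduct]
            refine Finset.sum_congr rfl fun j _ => ?_
            rw [← hadjQ]
            simp [Matrix.map_apply]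
          rw [hmv] at h1i
          show x (Sum.inl i) = _
          have hyi : (P.det : ℚ) * x (Sum.inl i) = -∑ j, ((P.adjugate * Q) i j : ℚ) * z j := h1i
          have : x (Sum.inl i) = (P.det : ℚ)⁻¹ * -∑ j, ((P.adjugate * Q) i j : ℚ) * z j := by
            field_simp at hyi ⊢
            linarith [hyi]
          rw [this]
          rw [← Finset.sum_neg_distrib, Finset.mul_sum]
          refine Finset.sum_congr rfl fun j _ => ?_
          push_cast
          ring
      rw [hxsum]
      exact Submodule.sum_mem _ fun j _ => Submodule.smul_mem _ _
        (Submodule.subset_span ⟨j, rfl⟩)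
  -- Part (iii)
  · intro j
    have hsub : (Finset.univ.filter fun x => uVec p n P Q j x ≠ 0) ⊆
        (Finset.univ.image Sum.inl) ∪ {Sum.inr j} := by
      intro s hs
      rcases s with i | k
      · exact Finset.mem_union_left _ (Finset.mem_image.mpr ⟨i, Finset.mem_univ _, rfl⟩)
      · rw [Finset.mem_filter] at hs
        have : k = j := by
          by_contra hk
          simp [uVec, hk] at hs
        subst this
        exact Finset.mem_union_right _ (Finset.mem_singleton_self _)
    calc (Finset.univ.filter fun x => uVec p n P Q j x ≠ 0).card
        ≤ ((Finset.univ.image Sum.inl) ∪ {Sum.inr j}).card := Finset.card_le_card hsub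
      _ ≤ (Finset.univ.image (Sum.inl : Fin p → Fin p ⊕ Fin n)).card + 1 := by
          simpa using Finset.card_union_le (Finset.univ.image Sum.inl) {Sum.inr j}
      _ ≤ p + 1 := by
          simp [Finset.card_image_of_injective _ Sum.inl_injective]
  -- Part (iv)
  · intro h3P h3Q j x
    cases x with
    | inl i =>
      simp only [uVec, Sum.elim_inl, abs_neg]
      have hcr : (P.adjugate * Q) i j = (P.updateCol i (fun k => Q k j)).det := by
        have hc := congrFun (Matrix.cramer_eq_adjugate_mulVec P (fun k => Q k j)) i
        rw [Matrix.cramer_apply] at hc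
        have hm : (P.adjugate * Q) i j = P.adjugate.mulVec (fun k => Q k j) i := by
          simp [Matrix.mul_apply, Matrix.mulVec, dotProduct]
        rw [hm, ← hc]
      rw [hcr]
      apply abs_det_le_pow
      intro c
      by_cases hc : c = i
      · subst hc
        simpa [Matrix.updateCol_apply] using h3Q j
      · simpa [Matrix.updateCol_apply, hc] using h3P c
    | inr k =>
      simp only [uVec, Sum.elim_inr]
      by_cases hk : k = j
      · simpa [hk] using abs_det_le_pow P h3P
      · simp only [hk, if_false]
        positivity
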